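/- Let J ≥ 1, 0 ≤ j ≤ J−1, 0 ≤ L ≤ j and μ ∈ {0,…,2^j−1}. Let y ∈ ℝ^{2^J} and suppose that both y^{(j)}_s = 0 and y^{(j+1)}_s = 0 for every s ∈ {0,…,2^j−1} that is not of the form s = (μ+r) mod 2^j with 0 ≤ r ≤ 2^L−1. Then for every r ∈ {0,…,2^L−1} the first half of y^{(j+1)} is recovered from y^{(j)} and 2^L equidistant oddly indexed samples of ŷ via y^{(j+1)}_{(μ+r) mod 2^j} = (1/2) · ( y^{(j)}_{(μ+r) mod 2^j} + 2^{−L} · ω_{2^{j+1}}^{−((μ+r) mod 2^j)} · Σ_{p=0}^{2^L−1} ω_{2^L}^{−p(μ+r)} · ŷ_{2^{J−L}p + 2^{J−j−1}} ). -/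

import Mathlib

/-- `ω_M = e^{-2πi/M}`. -/
noncomputable def dftOmega (M : ℕ) : ℂ :=
  Complex.exp (-2 * Real.pi * Complex.I / M)

/-- Discrete Fourier transform of `y ∈ ℂ^M`: `ŷ_k = Σ_{l=0}^{M-1} ω_M^{kl} y_l`. -/
noncomputable def dft (M : ℕ) (y : ℕ → ℂ) (k : ℕ) : ℂ :=
  ∑ l ∈ Finset.range M, dftOmega M ^ (k * l) * y l

/-- Periodization `y^{(j)} ∈ ℝ^{2^j}` of `y ∈ ℝ^{2^J}`:
`y^{(j)}_k = Σ_{l=0}^{2^{J-j}-1} y_{k + 2^j l}`. -/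
def periodization (J j : ℕ) (y : ℕ → ℝ) (k : ℕ) : ℝ :=
  ∑ l ∈ Finset.range (2 ^ (J - j)), y (k + 2 ^ j * l)

lemma dftOmega_ne_zero (M : ℕ) : dftOmega M ≠ 0 := Complex.exp_ne_zero _

lemma isPrimitiveRoot_dftOmega (M : ℕ) (hM : M ≠ 0) :
    IsPrimitiveRoot (dftOmega M) M := by
  have h := Complex.isPrimitiveRoot_exp M hM
  have e : dftOmega M = (Complex.exp (2 * Real.pi * Complex.I / M))⁻¹ := by
    rw [← Complex.exp_neg]
    unfold dftOmega
    congr 1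
    ring
  rw [e]
  exact h.inv

lemma dftOmega_pow_card (M : ℕ) (hM : M ≠ 0) : dftOmega M ^ M = 1 :=
  (isPrimitiveRoot_dftOmega M hM).pow_eq_one

lemma dftOmega_pow (d M : ℕ) (hd : d ≠ 0) (hM : M ≠ 0) :
    dftOmega (d * M) ^ d = dftOmega M := by
  unfold dftOmega
  rw [← Complex.exp_nat_mul]
  congr 1
  have hd' : (d : ℂ) ≠ 0 := Nat.cast_ne_zero.2 hd
  have hM' : (M : ℂ) ≠ 0 := Nat.cast_ne_zero.2 hM
  push_cast
  field_simp

lemma dftOmega_orth (N : ℕ) (hN : N ≠ 0) (a : ℤ) :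
    ∑ p ∈ Finset.range N, (dftOmega N ^ a) ^ p =
      if (N : ℤ) ∣ a then (N : ℂ) else 0 := by
  have hiff := (isPrimitiveRoot_dftOmega N hN).zpow_eq_one_iff_dvd a
  by_cases hdvd : (N : ℤ) ∣ a
  · have h : dftOmega N ^ a = 1 := hiff.2 hdvd
    simp [hdvd, h]
  · have h : dftOmega N ^ a ≠ 1 := fun hc => hdvd (hiff.1 hc)
    rw [if_neg hdvd, geom_sum_eq h]
    have : (dftOmega N ^ a) ^ N = 1 := by
      rw [← zpow_natCast (dftOmega N ^ a) N, ← zpow_mul, mul_comm, zpow_mul,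
        zpow_natCast, dftOmega_pow_card N hN, one_zpow]
    rw [this]
    simp

lemma sum_range_mul' {β : Type*} [AddCommMonoid β] (f : ℕ → β) (a b : ℕ) :
    ∑ l ∈ Finset.range (a * b), f l =
      ∑ t ∈ Finset.range b, ∑ s ∈ Finset.range a, f (a * t + s) := by
  induction b with
  | zero => simp
  | succ b ih =>
      rw [Nat.mul_succ, Finset.sum_range_add, ih, Finset.sum_range_succ]

lemma periodization_succ (J j : ℕ) (h : j + 1 ≤ J) (y : ℕ → ℝ) (s : ℕ) :
    periodization J j y s =
      periodization J (j + 1) y s + periodization J (j + 1) y (s + 2 ^ j) := by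
  unfold periodization
  rw [show J - j = (J - (j + 1)) + 1 by omega, pow_succ,
    show (2:ℕ) ^ (J - (j+1)) * 2 = 2 * 2 ^ (J - (j+1)) by ring,
    sum_range_mul' _ 2 (2 ^ (J - (j+1))), ← Finset.sum_add_distrib]
  apply Finset.sum_congr rfl
  intro t _
  rw [Finset.sum_range_succ, Finset.sum_range_one]
  congr 2 <;> ring

lemma dftOmega_two : dftOmega 2 = -1 := by
  unfold dftOmega
  rw [show (-2 * (Real.pi:ℂ) * Complex.I / (2:ℕ)) = -(Real.pi * Complex.I) by
    push_cast; ring]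
  rw [Complex.exp_neg, Complex.exp_pi_mul_I]
  norm_num

lemma dftOmega_neg_one (j : ℕ) : dftOmega (2 ^ (j + 1)) ^ (2 ^ j : ℕ) = -1 := by
  have := dftOmega_pow (2 ^ j) 2 (pow_ne_zero _ two_ne_zero) two_ne_zero
  rw [show (2:ℕ) ^ j * 2 = 2 ^ (j + 1) by rw [pow_succ]] at this
  rw [this, dftOmega_two]

lemma dft_sample (J j L : ℕ) (hjJ : j + 1 ≤ J) (hL : L ≤ j) (y : ℕ → ℝ) (p : ℕ) :
    dft (2 ^ J) (fun l => (y l : ℂ)) (2 ^ (J - L) * p + 2 ^ (J - j - 1)) =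
      ∑ s ∈ Finset.range (2 ^ (j + 1)),
        dftOmega (2 ^ L) ^ (p * s) * dftOmega (2 ^ (j + 1)) ^ s *
          (periodization J (j + 1) y s : ℂ) := by
  have hcard : dftOmega (2 ^ J) ^ (2 ^ J : ℕ) = 1 :=
    dftOmega_pow_card _ (pow_ne_zero _ two_ne_zero)
  have hω1 : dftOmega (2 ^ J) ^ (2 ^ (J - L) : ℕ) = dftOmega (2 ^ L) := by
    have := dftOmega_pow (2 ^ (J - L)) (2 ^ L) (pow_ne_zero _ two_ne_zero)
      (pow_ne_zero _ two_ne_zero)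
    rwa [show (2:ℕ) ^ (J - L) * 2 ^ L = 2 ^ J by rw [← pow_add]; congr 1; omega] at this
  have hω2 : dftOmega (2 ^ J) ^ (2 ^ (J - j - 1) : ℕ) = dftOmega (2 ^ (j + 1)) := by
    have := dftOmega_pow (2 ^ (J - j - 1)) (2 ^ (j + 1)) (pow_ne_zero _ two_ne_zero)
      (pow_ne_zero _ two_ne_zero)
    rwa [show (2:ℕ) ^ (J - j - 1) * 2 ^ (j + 1) = 2 ^ J by rw [← pow_add]; congr 1; omega]
      at this
  have key : ∀ s t : ℕ,
      dftOmega (2 ^ J) ^ ((2 ^ (J - L) * p + 2 ^ (J - j - 1)) * (2 ^ (j + 1) * t + s)) =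
        dftOmega (2 ^ L) ^ (p * s) * dftOmega (2 ^ (j + 1)) ^ s := by
    intro s t
    have h1 : (2:ℕ) ^ (J - L) * 2 ^ (j + 1) = 2 ^ J * 2 ^ (j + 1 - L) := by
      rw [← pow_add, ← pow_add]; congr 1; omega
    have h2 : (2:ℕ) ^ (J - j - 1) * 2 ^ (j + 1) = 2 ^ J := by
      rw [← pow_add]; congr 1; omega
    have e : (2 ^ (J - L) * p + 2 ^ (J - j - 1)) * (2 ^ (j + 1) * t + s) =
        2 ^ J * ((2 ^ (j + 1 - L) * p + 1) * t) +
          (2 ^ (J - L) * (p * s) + 2 ^ (J - j - 1) * s) := by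
      calc (2 ^ (J - L) * p + 2 ^ (J - j - 1)) * (2 ^ (j + 1) * t + s)
          = (2 ^ (J - L) * 2 ^ (j + 1)) * (p * t) + (2 ^ (J - j - 1) * 2 ^ (j + 1)) * t +
            (2 ^ (J - L) * (p * s) + 2 ^ (J - j - 1) * s) := by ring
        _ = (2 ^ J * 2 ^ (j + 1 - L)) * (p * t) + 2 ^ J * t +
            (2 ^ (J - L) * (p * s) + 2 ^ (J - j - 1) * s) := by rw [h1, h2]
        _ = _ := by ring
    rw [e, pow_add, pow_mul _ (2 ^ J), hcard, one_pow, one_mul, pow_add,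
      pow_mul _ (2 ^ (J - L)), pow_mul _ (2 ^ (J - j - 1)), hω1, hω2]
  unfold dft
  rw [show Finset.range (2 ^ J) = Finset.range (2 ^ (j + 1) * 2 ^ (J - j - 1)) by
      congr 1; rw [← pow_add]; congr 1; omega,
    sum_range_mul' _ (2 ^ (j + 1)) (2 ^ (J - j - 1)), Finset.sum_comm]
  apply Finset.sum_congr rfl
  intro s _
  unfold periodization
  rw [show J - (j + 1) = J - j - 1 by omega, Complex.ofReal_sum, Finset.mul_sum]
  apply Finset.sum_congr rfl
  intro t _
  rw [key s t]
  congr 2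
  ring

lemma dft_sample_fold (J j L : ℕ) (hjJ : j + 1 ≤ J) (hL : L ≤ j) (y : ℕ → ℝ) (p : ℕ) :
    dft (2 ^ J) (fun l => (y l : ℂ)) (2 ^ (J - L) * p + 2 ^ (J - j - 1)) =
      ∑ s ∈ Finset.range (2 ^ j),
        dftOmega (2 ^ L) ^ (p * s) * dftOmega (2 ^ (j + 1)) ^ s *
          (2 * (periodization J (j + 1) y s : ℂ) - (periodization J j y s : ℂ)) := by
  rw [dft_sample J j L hjJ hL y p,
    show Finset.range (2 ^ (j + 1)) = Finset.range (2 ^ j + 2 ^ j) by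
      congr 1; rw [pow_succ]; ring,
    Finset.sum_range_add, ← Finset.sum_add_distrib]
  apply Finset.sum_congr rfl
  intro s _
  have hsplit := periodization_succ J j hjJ y s
  have hωL : dftOmega (2 ^ L) ^ (p * (2 ^ j + s)) = dftOmega (2 ^ L) ^ (p * s) := by
    have h2j : (2:ℕ) ^ j = 2 ^ L * 2 ^ (j - L) := by rw [← pow_add]; congr 1; omega
    have e : p * (2 ^ j + s) = 2 ^ L * (2 ^ (j - L) * p) + p * s := by
      rw [h2j]; ring
    rw [e, pow_add, pow_mul, dftOmega_pow_card _ (pow_ne_zero _ two_ne_zero), one_pow,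
      one_mul]
  have hωn : dftOmega (2 ^ (j + 1)) ^ (2 ^ j + s) = -(dftOmega (2 ^ (j + 1)) ^ s) := by
    rw [pow_add, dftOmega_neg_one]; ring
  rw [hωL, hωn, show 2 ^ j + s = s + 2 ^ j by ring]
  push_cast [hsplit]
  ring

theorem stmt_12 (J : ℕ) (hJ : 1 ≤ J) (j : ℕ) (hj : j ≤ J - 1)
    (L : ℕ) (hL : L ≤ j) (μ : ℕ) (hμ : μ < 2 ^ j) (y : ℕ → ℝ)
    (hsupp : ∀ s, s < 2 ^ j → (∀ r, r < 2 ^ L → s ≠ (μ + r) % 2 ^ j) →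
      periodization J j y s = 0 ∧ periodization J (j + 1) y s = 0) :
    ∀ r, r < 2 ^ L →
      (periodization J (j + 1) y ((μ + r) % 2 ^ j) : ℂ) =
        (1 / 2) * ((periodization J j y ((μ + r) % 2 ^ j) : ℂ) +
          ((2 : ℂ) ^ L)⁻¹ * dftOmega (2 ^ (j + 1)) ^ (-(((μ + r) % 2 ^ j : ℕ) : ℤ)) *
            ∑ p ∈ Finset.range (2 ^ L),
              dftOmega (2 ^ L) ^ (-((p * (μ + r) : ℕ) : ℤ)) *
                dft (2 ^ J) (fun l => (y l : ℂ)) (2 ^ (J - L) * p + 2 ^ (J - j - 1))) := by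
  intro r hr
  have hjJ : j + 1 ≤ J := by omega
  have h2j : (2:ℤ) ^ j = 2 ^ L * 2 ^ (j - L) := by rw [← pow_add]; congr 1; omega
  set n := (μ + r) % 2 ^ j with hn
  have hn2 : n < 2 ^ j := Nat.mod_lt _ (pow_pos (by norm_num) j)
  have hmod : ∀ m : ℕ, ((m % 2 ^ j : ℕ) : ℤ) - (m : ℤ) = -(2 ^ j * ((m / 2 ^ j : ℕ) : ℤ)) := by
    intro m
    have h := Nat.div_add_mod m (2 ^ j)
    have h' : ((2 ^ j * (m / 2 ^ j) + m % 2 ^ j : ℕ) : ℤ) = (m : ℤ) := by exact_mod_cast h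
    push_cast at h' ⊢
    linarith
  have hS : ∑ p ∈ Finset.range (2 ^ L),
      dftOmega (2 ^ L) ^ (-((p * (μ + r) : ℕ) : ℤ)) *
        dft (2 ^ J) (fun l => (y l : ℂ)) (2 ^ (J - L) * p + 2 ^ (J - j - 1)) =
      (2 : ℂ) ^ L * dftOmega (2 ^ (j + 1)) ^ n *
        (2 * (periodization J (j + 1) y n : ℂ) - (periodization J j y n : ℂ)) := by
    calc ∑ p ∈ Finset.range (2 ^ L),
        dftOmega (2 ^ L) ^ (-((p * (μ + r) : ℕ) : ℤ)) *
          dft (2 ^ J) (fun l => (y l : ℂ)) (2 ^ (J - L) * p + 2 ^ (J - j - 1))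
        = ∑ p ∈ Finset.range (2 ^ L), ∑ s ∈ Finset.range (2 ^ j),
            (dftOmega (2 ^ L) ^ ((s : ℤ) - ((μ + r : ℕ) : ℤ))) ^ p *
              (dftOmega (2 ^ (j + 1)) ^ s *
                (2 * (periodization J (j + 1) y s : ℂ) - (periodization J j y s : ℂ))) := by
          apply Finset.sum_congr rfl
          intro p _
          rw [dft_sample_fold J j L hjJ hL y p, Finset.mul_sum]
          apply Finset.sum_congr rfl
          intro s _
          have e : dftOmega (2 ^ L) ^ (-((p * (μ + r) : ℕ) : ℤ)) *
              dftOmega (2 ^ L) ^ (p * s) =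
              (dftOmega (2 ^ L) ^ ((s : ℤ) - ((μ + r : ℕ) : ℤ))) ^ p := by
            rw [← zpow_natCast (dftOmega (2 ^ L)) (p * s),
              ← zpow_add₀ (dftOmega_ne_zero _),
              ← zpow_natCast (dftOmega (2 ^ L) ^ ((s : ℤ) - ((μ + r : ℕ) : ℤ))) p,
              ← zpow_mul]
            congr 1
            push_cast
            ring
          rw [← e]
          ring
      _ = ∑ s ∈ Finset.range (2 ^ j),
            (∑ p ∈ Finset.range (2 ^ L),
              (dftOmega (2 ^ L) ^ ((s : ℤ) - ((μ + r : ℕ) : ℤ))) ^ p) *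
              (dftOmega (2 ^ (j + 1)) ^ s *
                (2 * (periodization J (j + 1) y s : ℂ) - (periodization J j y s : ℂ))) := by
          rw [Finset.sum_comm]
          exact Finset.sum_congr rfl fun s _ => (Finset.sum_mul _ _ _).symm
      _ = ∑ s ∈ Finset.range (2 ^ j),
            (if ((2 ^ L : ℕ) : ℤ) ∣ ((s : ℤ) - ((μ + r : ℕ) : ℤ)) then ((2 ^ L : ℕ) : ℂ)
              else 0) *
              (dftOmega (2 ^ (j + 1)) ^ s *
                (2 * (periodization J (j + 1) y s : ℂ) - (periodization J j y s : ℂ))) := by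
          apply Finset.sum_congr rfl
          intro s _
          rw [dftOmega_orth _ (pow_ne_zero _ two_ne_zero)]
      _ = (2 : ℂ) ^ L * dftOmega (2 ^ (j + 1)) ^ n *
            (2 * (periodization J (j + 1) y n : ℂ) - (periodization J j y n : ℂ)) := by
          rw [Finset.sum_eq_single n]
          · have hdvd : ((2 ^ L : ℕ) : ℤ) ∣ ((n : ℤ) - ((μ + r : ℕ) : ℤ)) := by
              have e1 := hmod (μ + r)
              refine ⟨-(2 ^ (j - L) * (((μ + r) / 2 ^ j : ℕ) : ℤ)), ?_⟩
              rw [hn]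
              push_cast
              push_cast at e1
              rw [e1]
              rw [h2j]
              ring
            rw [if_pos hdvd]
            push_cast
            ring
          · intro b hb hbne
            by_cases hbs : ∀ r', r' < 2 ^ L → b ≠ (μ + r') % 2 ^ j
            · obtain ⟨h1, h2⟩ := hsupp b (Finset.mem_range.1 hb) hbs
              simp [h1, h2]
            · push_neg at hbs
              obtain ⟨r', hr', hbr'⟩ := hbs
              have hndvd : ¬ ((2 ^ L : ℕ) : ℤ) ∣ ((b : ℤ) - ((μ + r : ℕ) : ℤ)) := by
                intro hd
                have e1 := hmod (μ + r')
                have hdvd2 : ((2 ^ L : ℕ) : ℤ) ∣ ((r' : ℤ) - (r : ℤ)) := by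
                  have e2 : ((r' : ℤ) - (r : ℤ)) =
                      ((b : ℤ) - ((μ + r : ℕ) : ℤ)) +
                        2 ^ j * (((μ + r') / 2 ^ j : ℕ) : ℤ) := by
                    rw [hbr']
                    push_cast
                    push_cast at e1
                    linarith
                  rw [e2]
                  refine dvd_add hd ⟨2 ^ (j - L) * (((μ + r') / 2 ^ j : ℕ) : ℤ), ?_⟩
                  push_cast
                  rw [h2j]
                  ring
                have habs : |(r' : ℤ) - (r : ℤ)| < ((2 ^ L : ℕ) : ℤ) := by
                  have h1 : (r' : ℤ) < ((2 ^ L : ℕ) : ℤ) := by exact_mod_cast hr'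
                  have h2 : (r : ℤ) < ((2 ^ L : ℕ) : ℤ) := by exact_mod_cast hr
                  rw [abs_sub_lt_iff]
                  constructor <;> [linarith [Int.natCast_nonneg r]; linarith [Int.natCast_nonneg r']]
                have := Int.eq_zero_of_abs_lt_dvd hdvd2 habs
                have : r' = r := by omega
                exact hbne (by rw [hbr', this])
              rw [if_neg hndvd, zero_mul]
          · intro hnotin
            exact absurd (Finset.mem_range.2 hn2) hnotin
  rw [hS]
  have h2L : ((2 : ℂ)) ^ L ≠ 0 := pow_ne_zero _ two_ne_zero
  have hω1 : dftOmega (2 ^ (j + 1)) ^ (-(n : ℤ)) * dftOmega (2 ^ (j + 1)) ^ (n : ℕ) = 1 := by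
    rw [← zpow_natCast (dftOmega (2 ^ (j + 1))) n, ← zpow_add₀ (dftOmega_ne_zero _),
      neg_add_cancel, zpow_zero]
  have key : ((2 : ℂ) ^ L)⁻¹ * dftOmega (2 ^ (j + 1)) ^ (-(n : ℤ)) *
      ((2 : ℂ) ^ L * dftOmega (2 ^ (j + 1)) ^ n *
        (2 * (periodization J (j + 1) y n : ℂ) - (periodization J j y n : ℂ))) =
      2 * (periodization J (j + 1) y n : ℂ) - (periodization J j y n : ℂ) := by
    calc ((2 : ℂ) ^ L)⁻¹ * dftOmega (2 ^ (j + 1)) ^ (-(n : ℤ)) *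
        ((2 : ℂ) ^ L * dftOmega (2 ^ (j + 1)) ^ n *
          (2 * (periodization J (j + 1) y n : ℂ) - (periodization J j y n : ℂ)))
        = (dftOmega (2 ^ (j + 1)) ^ (-(n : ℤ)) * dftOmega (2 ^ (j + 1)) ^ (n : ℕ)) *
            (((2 : ℂ) ^ L)⁻¹ * (2 : ℂ) ^ L) *
            (2 * (periodization J (j + 1) y n : ℂ) - (periodization J j y n : ℂ)) := by
          ring
      _ = _ := by rw [hω1, inv_mul_cancel₀ h2L]; ring
  rw [key]
  ring
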